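/- In a simply-laced triangle-free Coxeter system, two braid equivalent links α and β of rank r ≥ 1 are equal if and only if they agree in all even positions, i.e., α_{⟦2i⟧} = β_{⟦2i⟧} for all 1 ≤ i ≤ r. In particular, a link is uniquely determined within its braid class by the generators appearing in its even positions. -/

import Mathlib

open List

namespace BraidFormal

variable {B : Type*}

/-- A single braid move: replace a factor `s t s` with `t s t` where `m(s,t) = 3`. -/
def IsBraidMove (M : CoxeterMatrix B) (w w' : List B) : Prop :=
  ∃ (u v : List B) (s t : B), M s t = 3 ∧
    w = u ++ [s, t, s] ++ v ∧ w' = u ++ [t, s, t] ++ v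

/-- Braid equivalence: the reflexive-transitive closure of braid moves. -/
def BraidEquiv (M : CoxeterMatrix B) : List B → List B → Prop :=
  Relation.ReflTransGen (IsBraidMove M)

/-- The braid class of a word. -/
def BraidClass (M : CoxeterMatrix B) (α : List B) : Set (List B) :=
  {β | BraidEquiv M α β}

/-- `w` has a braid shadow at (0-based) positions `i, i+1, i+2`:
the letters there are `s, t, s` with `m(s,t) = 3`.
(This corresponds to the 1-based interval `⟦i+1, i+3⟧` of the paper.) -/
def HasShadowAt (M : CoxeterMatrix B) (w : List B) (i : ℕ) : Prop :=
  ∃ s t : B, M s t = 3 ∧ w[i]? = some s ∧ w[i+1]? = some t ∧ w[i+2]? = some s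

/-- The braid class of `α` has a braid shadow at position `i`. -/
def ClassHasShadowAt (M : CoxeterMatrix B) (α : List B) (i : ℕ) : Prop :=
  ∃ β ∈ BraidClass M α, HasShadowAt M β i

/-- The rank of a reduced expression: the number of braid shadows of its braid class. -/
noncomputable def rank (M : CoxeterMatrix B) (α : List B) : ℕ :=
  Set.ncard {i | ClassHasShadowAt M α i}

/-- A Coxeter matrix is simply laced if all entries are at most 3. -/
def SimplyLaced (M : CoxeterMatrix B) : Prop := ∀ s t : B, M s t ≤ 3

/-- A Coxeter matrix is triangle free if its Coxeter graph has no three-cycles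
(all of whose edges are labelled 3). -/
def TriangleFree (M : CoxeterMatrix B) : Prop :=
  ∀ s t u : B, s ≠ t → t ≠ u → s ≠ u → M s t = 3 → M t u = 3 → M s u ≠ 3

/-- The set of generators appearing in (0-based) position `k` of some word in the
braid class of `α`. -/
def classSupp (M : CoxeterMatrix B) (α : List B) (k : ℕ) : Set B :=
  {s | ∃ β ∈ BraidClass M α, β[k]? = some s}

/-- The set of generators appearing in (0-based) positions `i` through `j` of `w`. -/
def suppInterval (w : List B) (i j : ℕ) : Set B :=
  {s | ∃ k, i ≤ k ∧ k ≤ j ∧ w[k]? = some s}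

variable {W : Type*} [Group W] {M : CoxeterMatrix B}

/-- `α` is a link of rank `r`: a reduced expression of length `2r+1` whose braid class
has braid shadows exactly at the (0-based) positions `0, 2, 4, …, 2r-2`
(the 1-based intervals `⟦1,3⟧, ⟦3,5⟧, …, ⟦2r-1,2r+1⟧`). -/
def IsLink (cs : CoxeterSystem M W) (α : List B) (r : ℕ) : Prop :=
  cs.IsReduced α ∧ α.length = 2 * r + 1 ∧
    ∀ i : ℕ, ClassHasShadowAt M α i ↔ ∃ j < r, i = 2 * j

/-- A Fibonacci link: a link all of whose braid-class braid shadows are braid shadows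
of the link itself. -/
def IsFibLink (cs : CoxeterSystem M W) (φ : List B) (r : ℕ) : Prop :=
  IsLink cs φ r ∧ ∀ i : ℕ, ClassHasShadowAt M φ i → HasShadowAt M φ i

/-! ### Auxiliary development for Statement 6.

The key observation is that in the braid class of a link every braid shadow
(hence every braid move) occurs at an even position.  We develop a purely
combinatorial theory of "even braid moves" on lists and show that under the
reflexive-transitive closure of even braid moves, a word is determined by the
letters in its odd positions. -/

section EvenMoves

variable (M : CoxeterMatrix B)

/-- A braid move at an even position. -/
def EMv (w w' : List B) : Prop :=
  ∃ (u v : List B) (s t : B), M s t = 3 ∧ Even u.length ∧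
    w = u ++ [s, t, s] ++ v ∧ w' = u ++ [t, s, t] ++ v

/-- A braid move at an even position `≥ 2`. -/
def EMv2 (w w' : List B) : Prop :=
  ∃ (u v : List B) (s t : B), M s t = 3 ∧ Even u.length ∧ 2 ≤ u.length ∧
    w = u ++ [s, t, s] ++ v ∧ w' = u ++ [t, s, t] ++ v

/-- A braid move at position `0`. -/
def EMv0 (w w' : List B) : Prop :=
  ∃ (v : List B) (s t : B), M s t = 3 ∧ w = s :: t :: s :: v ∧ w' = t :: s :: t :: v

/-- Equivalence by braid moves at even positions. -/
def EEquiv : List B → List B → Prop := Relation.ReflTransGen (EMv M)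

/-- Equivalence by braid moves at even positions `≥ 2`. -/
def EEquiv2 : List B → List B → Prop := Relation.ReflTransGen (EMv2 M)

/-- Even-equivalence with exactly `n` moves at position `0`. -/
def EEn : ℕ → List B → List B → Prop
  | 0 => EEquiv2 M
  | n + 1 => fun w w' => ∃ a b, EEquiv2 M w a ∧ EMv0 M a b ∧ EEn n b w'

variable {M}

lemma ne_of_m3 {s t : B} (h : M s t = 3) : s ≠ t := by
  rintro rfl
  rw [M.diagonal] at h
  omega

lemma emv_length {w w' : List B} (h : EMv M w w') : w'.length = w.length := by
  obtain ⟨u, v, s, t, -, -, rfl, rfl⟩ := h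
  simp

lemma eequiv_length {w w' : List B} (h : EEquiv M w w') : w'.length = w.length := by
  induction h with
  | refl => rfl
  | tail _ h ih => rw [emv_length h, ih]

lemma emv0_or_emv2 {w w' : List B} (h : EMv M w w') : EMv0 M w w' ∨ EMv2 M w w' := by
  obtain ⟨u, v, s, t, h3, hev, rfl, rfl⟩ := h
  match u, hev with
  | [], _ => exact Or.inl ⟨v, s, t, h3, rfl, rfl⟩
  | [x], hev => simp [Nat.even_iff] at hev
  | x :: y :: u', hev =>
    exact Or.inr ⟨x :: y :: u', v, s, t, h3, hev, by simp, rfl, rfl⟩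

lemma emv2_emv {w w' : List B} (h : EMv2 M w w') : EMv M w w' := by
  obtain ⟨u, v, s, t, h3, hev, -, rfl, rfl⟩ := h
  exact ⟨u, v, s, t, h3, hev, rfl, rfl⟩

lemma emv0_emv {w w' : List B} (h : EMv0 M w w') : EMv M w w' := by
  obtain ⟨v, s, t, h3, rfl, rfl⟩ := h
  exact ⟨[], v, s, t, h3, by simp, rfl, rfl⟩

lemma eequiv2_eequiv {w w' : List B} (h : EEquiv2 M w w') : EEquiv M w w' :=
  Relation.ReflTransGen.mono (fun _ _ h => emv2_emv h) _ _ h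

lemma een_pre {n : ℕ} {w a w' : List B} (h : EEquiv2 M w a) (h' : EEn M n a w') :
    EEn M n w w' := by
  match n, h' with
  | 0, h' => exact h.trans h'
  | n + 1, ⟨c, d, h1, h0, h2⟩ => exact ⟨c, d, h.trans h1, h0, h2⟩

lemma eequiv_een {w w' : List B} (h : EEquiv M w w') : ∃ n, EEn M n w w' := by
  induction h using Relation.ReflTransGen.head_induction_on with
  | refl => exact ⟨0, Relation.ReflTransGen.refl⟩
  | head hab _ ih =>
    obtain ⟨n, hn⟩ := ih
    rcases emv0_or_emv2 hab with h0 | h2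
    · exact ⟨n + 1, _, _, Relation.ReflTransGen.refl, h0, hn⟩
    · exact ⟨n, een_pre (Relation.ReflTransGen.single h2) hn⟩

lemma eequiv_short {w w' : List B} (hl : w.length ≤ 2) (h : EEquiv M w w') : w' = w := by
  rcases Relation.ReflTransGen.cases_head h with rfl | ⟨b, hb, -⟩
  · rfl
  · obtain ⟨u, v, s, t, -, -, rfl, -⟩ := hb
    simp at hl
    omega

lemma emv2_cons {x : B} {σ τ : List B} (h : EMv2 M (x :: σ) τ) :
    ∃ σ', τ = x :: σ' ∧ ∀ y : B, EMv2 M (y :: σ) (y :: σ') := by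
  obtain ⟨u, v, s, t, h3, hev, hlen, heq, rfl⟩ := h
  match u, hlen, heq with
  | z :: u', hlen, heq =>
    rw [List.cons_append, List.cons_append, List.cons.injEq] at heq
    obtain ⟨rfl, rfl⟩ := heq
    refine ⟨u' ++ [t, s, t] ++ v, by simp, fun y =>
      ⟨y :: u', v, s, t, h3, by simpa using hev, by simpa using hlen, by simp, by simp⟩⟩

lemma emv2_cons2 {x y : B} {σ τ : List B} (h : EMv2 M (x :: y :: σ) τ) :
    ∃ σ', τ = x :: y :: σ' ∧ EMv M σ σ' := by
  obtain ⟨u, v, s, t, h3, hev, hlen, heq, rfl⟩ := h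
  match u, hlen, heq with
  | z₁ :: z₂ :: u', _, heq =>
    simp only [List.cons_append, List.cons.injEq] at heq
    obtain ⟨rfl, rfl, rfl⟩ := heq
    have hev' : Even u'.length := by
      rw [List.length_cons, List.length_cons, Nat.even_add_one, Nat.even_add_one] at hev
      simpa using hev
    exact ⟨u' ++ [t, s, t] ++ v, by simp, u', v, s, t, h3, hev', rfl, rfl⟩

lemma emv_lift2 {x y : B} {σ σ' : List B} (h : EMv M σ σ') :
    EMv2 M (x :: y :: σ) (x :: y :: σ') := by
  obtain ⟨u, v, s, t, h3, hev, rfl, rfl⟩ := h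
  refine ⟨x :: y :: u, v, s, t, h3, ?_, by simp, by simp, by simp⟩
  simpa [Nat.even_add_one, Nat.not_even_iff_odd, Nat.odd_add_one] using hev

lemma eequiv2_cons {x : B} {σ τ : List B} (h : EEquiv2 M (x :: σ) τ) :
    ∃ σ', τ = x :: σ' ∧ ∀ y : B, EEquiv2 M (y :: σ) (y :: σ') := by
  induction h with
  | refl => exact ⟨σ, rfl, fun _ => Relation.ReflTransGen.refl⟩
  | tail _ hbc ih =>
    obtain ⟨σ₁, rfl, f⟩ := ih
    obtain ⟨σ₂, rfl, g⟩ := emv2_cons hbc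
    exact ⟨σ₂, rfl, fun y => (f y).tail (g y)⟩

lemma eequiv2_cons2 {x y : B} {σ τ : List B} (h : EEquiv2 M (x :: y :: σ) τ) :
    ∃ σ', τ = x :: y :: σ' ∧ EEquiv M σ σ' := by
  induction h with
  | refl => exact ⟨σ, rfl, Relation.ReflTransGen.refl⟩
  | tail _ hbc ih =>
    obtain ⟨σ₁, rfl, f⟩ := ih
    obtain ⟨σ₂, rfl, g⟩ := emv2_cons2 hbc
    exact ⟨σ₂, rfl, f.tail g⟩

lemma eequiv_lift2 {x y : B} {σ σ' : List B} (h : EEquiv M σ σ') :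
    EEquiv2 M (x :: y :: σ) (x :: y :: σ') := by
  induction h with
  | refl => exact Relation.ReflTransGen.refl
  | tail _ hbc ih => exact ih.tail (emv_lift2 hbc)

/-- The transfer lemma: if `t :: ρ` and `t :: ρ'` are even-equivalent and `m s t = 3`,
then `s :: ρ` and `s :: ρ'` are even-equivalent. -/
theorem transfer : ∀ (ρ ρ' : List B) (n : ℕ) (s t : B), M s t = 3 →
    EEn M n (t :: ρ) (t :: ρ') → EEquiv M (s :: ρ) (s :: ρ') := by
  intro ρ ρ' n s t h3 h
  match n, h with
  | 0, h =>
    obtain ⟨σ', heq, hy⟩ := eequiv2_cons h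
    injection heq with _ e2
    subst e2
    exact eequiv2_eequiv (hy s)
  | n' + 1, ⟨c₁, c₂, h₁, hx, h₂⟩ =>
    obtain ⟨ρ₁, hc₁, -⟩ := eequiv2_cons h₁
    obtain ⟨v, s₁, y, h3', hc₁', hc₂⟩ := hx
    rw [hc₁] at hc₁'
    injection hc₁' with e1 e2
    subst e1
    subst e2
    -- c₁ = t :: y :: t :: v, c₂ = y :: t :: y :: v, M t y = 3
    have hty : t ≠ y := ne_of_m3 h3'
    have hlen : ρ.length = v.length + 2 := by
      have := eequiv_length (eequiv2_eequiv h₁)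
      rw [hc₁] at this
      simpa using this.symm
    match n', h₂ with
    | 0, h₂ =>
      rw [hc₂] at h₂
      obtain ⟨σ'', heq, -⟩ := eequiv2_cons h₂
      injection heq with e1 _
      exact absurd e1 hty
    | m + 1, ⟨d₁, d₂, h₃, hx₂, h₄⟩ =>
      rw [hc₂] at h₃
      obtain ⟨τ, hd₁, hEτ⟩ := eequiv2_cons2 h₃
      obtain ⟨v₂, s₂, t₂, h3₂, hd₁', hd₂⟩ := hx₂
      rw [hd₁] at hd₁'
      injection hd₁' with e1 e2
      injection e2 with e3 e4
      subst e1
      subst e3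
      subst e4
      -- hEτ : EEquiv M (y :: v) (y :: v₂)
      obtain ⟨k, hk⟩ := eequiv_een hEτ
      have step1 : EEquiv M (t :: v) (t :: v₂) := transfer v v₂ k t y h3' hk
      have hlift : EEquiv2 M c₁ d₂ := by
        rw [hc₁, hd₂]
        exact eequiv_lift2 step1
      have hEn : EEn M m (t :: ρ) (t :: ρ') := een_pre (h₁.trans hlift) h₄
      exact transfer ρ ρ' m s t h3 hEn
termination_by ρ _ n => (ρ.length, n)
decreasing_by
  · exact Prod.Lex.left _ _ (by omega)
  · exact Prod.Lex.right _ (by omega)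

/-- If two even-equivalent words share their second letter, they share their first
letter and their tails past the first two letters are even-equivalent. -/
theorem second_letter : ∀ (n : ℕ) (x y x' : B) (ρ ρ' : List B),
    EEn M n (x :: y :: ρ) (x' :: y :: ρ') → x' = x ∧ EEquiv M ρ ρ' := by
  intro n x y x' ρ ρ' h
  match n, h with
  | 0, h =>
    obtain ⟨σ', heq, hE⟩ := eequiv2_cons2 h
    injection heq with e1 e2
    injection e2 with _ e4
    subst e4
    exact ⟨e1, hE⟩
  | n' + 1, ⟨c₁, c₂, h₁, hx, h₂⟩ =>
    obtain ⟨τ₀, hc₁, -⟩ := eequiv2_cons2 h₁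
    obtain ⟨v, s₁, t₁, h3, hc₁', hc₂⟩ := hx
    rw [hc₁] at hc₁'
    injection hc₁' with e1 e2
    injection e2 with e3 e4
    subst e1
    subst e3
    subst e4
    -- c₁ = x :: y :: x :: v, c₂ = y :: x :: y :: v, M x y = 3
    have hxy : x ≠ y := ne_of_m3 h3
    match n', h₂ with
    | 0, h₂ =>
      rw [hc₂] at h₂
      obtain ⟨σ'', heq, -⟩ := eequiv2_cons2 h₂
      injection heq with e1 e2
      injection e2 with e3 _
      exact absurd e3.symm hxy
    | m + 1, ⟨d₁, d₂, h₃, hx₂, h₄⟩ =>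
      rw [hc₂] at h₃
      obtain ⟨τ, hd₁, hEτ⟩ := eequiv2_cons2 h₃
      obtain ⟨v₂, s₂, t₂, h3₂, hd₁', hd₂⟩ := hx₂
      rw [hd₁] at hd₁'
      injection hd₁' with e1 e2
      injection e2 with e3 e4
      subst e1
      subst e3
      subst e4
      -- hEτ : EEquiv M (y :: v) (y :: v₂)
      obtain ⟨k, hk⟩ := eequiv_een hEτ
      have step1 : EEquiv M (x :: v) (x :: v₂) := transfer v v₂ k x y h3 hk
      have hlift : EEquiv2 M c₁ d₂ := by
        rw [hc₁, hd₂]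
        exact eequiv_lift2 step1
      exact second_letter m x y x' ρ ρ' (een_pre (h₁.trans hlift) h₄)
termination_by n => n

/-- A word is determined, within its even-braid-move equivalence class, by the
letters in its odd positions. -/
theorem odds_determine : ∀ (w w' : List B), EEquiv M w w' →
    (∀ j : ℕ, w[2 * j + 1]? = w'[2 * j + 1]?) → w = w' := by
  intro w w' h ho
  match w, h, ho with
  | [], h, _ => exact (eequiv_short (by simp) h).symm
  | [a], h, _ => exact (eequiv_short (by simp) h).symm
  | [a, b], h, _ => exact (eequiv_short (by simp) h).symm
  | a :: b :: c :: ρ₀, h, ho =>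
    have hlen := eequiv_length h
    match w', h, ho, hlen with
    | [], h, _, hlen => simp at hlen
    | [a'], h, _, hlen => simp at hlen
    | a' :: b' :: ρ', h, ho, hlen =>
      have hcons2 : ∀ (x y : B) (l : List B) (m : ℕ), (x :: y :: l)[m + 1 + 1]? = l[m]? := by
        intro x y l m
        rw [List.getElem?_cons_succ, List.getElem?_cons_succ]
      obtain rfl : b = b' := by
        have h1 := ho 0
        have e : 2 * 0 + 1 = 0 + 1 := by omega
        rw [e] at h1
        rw [List.getElem?_cons_succ, List.getElem?_cons_succ] at h1
        rw [List.getElem?_cons_zero, List.getElem?_cons_zero] at h1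
        exact Option.some.inj h1
      obtain ⟨k, hk⟩ := eequiv_een h
      obtain ⟨rfl, hρ⟩ := second_letter k a b a' (c :: ρ₀) ρ' hk
      have hrest : (c :: ρ₀) = ρ' := by
        refine odds_determine (c :: ρ₀) ρ' hρ fun j => ?_
        have h1 := ho (j + 1)
        have e : 2 * (j + 1) + 1 = (2 * j + 1) + 1 + 1 := by ring
        rw [e, hcons2, hcons2] at h1
        exact h1
      rw [hrest]
termination_by w => w.length
decreasing_by
  simp

end EvenMoves

/-- a link is uniquely determined within its braid class by the letters
in its even (1-based) positions `2, 4, …, 2r`, i.e. the 0-based positions `2j+1` for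
`j < r`. -/
theorem statement_6 {B W : Type*} [Group W] {M : CoxeterMatrix B}
    (cs : CoxeterSystem M W) (hsl : SimplyLaced M) (htf : TriangleFree M)
    (α β : List B) (r : ℕ) (hlinkα : IsLink cs α r) (hlinkβ : IsLink cs β r)
    (hequiv : BraidEquiv M α β) (hr : 1 ≤ r) :
    α = β ↔ ∀ j < r, α[2 * j + 1]? = β[2 * j + 1]? := by
  constructor
  · rintro rfl
    exact fun _ _ => rfl
  · intro hodds
    have hall : ∀ γ, BraidEquiv M α γ → EEquiv M α γ := by
      intro γ hγ
      induction hγ with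
      | refl => exact Relation.ReflTransGen.refl
      | @tail b c hab hbc ih =>
        obtain ⟨u, v, s, t, h3, hbeq, hceq⟩ := hbc
        have hshadow : ClassHasShadowAt M α u.length := by
          refine ⟨b, hab, s, t, h3, ?_, ?_, ?_⟩ <;>
            rw [hbeq, List.append_assoc, List.getElem?_append_right (by omega)]
          · simp
          · have e : u.length + 1 - u.length = 1 := by omega
            rw [e]
            simp
          · have e : u.length + 2 - u.length = 2 := by omega
            rw [e]
            simp
        obtain ⟨j, hj, hju⟩ := (hlinkα.2.2 u.length).mp hshadow
        refine ih.tail ⟨u, v, s, t, h3, ⟨j, by omega⟩, hbeq, hceq⟩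
    refine odds_determine α β (hall β hequiv) fun j => ?_
    rcases lt_or_ge j r with hj | hj
    · exact hodds j hj
    · have h1 : α.length ≤ 2 * j + 1 := by rw [hlinkα.2.1]; omega
      have h2 : β.length ≤ 2 * j + 1 := by rw [hlinkβ.2.1]; omega
      rw [List.getElem?_eq_none h1, List.getElem?_eq_none h2]

end BraidFormal
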